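/- Let f: ℝ^{N×d} → ℝ be defined by f(Θ) = ∑_{(i,j)} D(i,j)·ℓ(θ_i, θ_j; y_{ij}) where D is a probability distribution over user-item pairs, ℓ(u,v;y) is twice differentiable and symmetric in (u,v), with ‖∇²_{uu}ℓ‖₂ ≤ L and ‖∇²_{uv}ℓ‖₂ ≤ L. Let p_i = ∑_j D(i,j) and p_j = ∑_i D(i,j). Fix a user i and item j and perturbations δ_i, δ_j ∈ ℝ^d, and let Θ' agree with Θ except θ'_i = θ_i + δ_i, θ'_j = θ_j + δ_j. Then f(Θ') ≤ f(Θ) + ⟨∇_{θ_i}f, δ_i⟩ + ⟨∇_{θ_j}f, δ_j⟩ + L·p_i·‖δ_i‖² + L·p_j·‖δ_j‖². -/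

import Mathlib

open Finset


lemma taylor_quad {E : Type*} [NormedAddCommGroup E] [NormedSpace ℝ E]
    (g : E → ℝ) (hg : ContDiff ℝ 2 g) (z h : E) (C : ℝ)
    (hC : ∀ w, ‖fderiv ℝ (fderiv ℝ g) w h h‖ ≤ C) :
    g (z + h) ≤ g z + fderiv ℝ g z h + C / 2 := by
  have hC0 : 0 ≤ C := le_trans (norm_nonneg _) (hC z)
  have hg1 : ContDiff ℝ 1 (fderiv ℝ g) := hg.fderiv_right (by norm_num)
  set γ : ℝ → E := fun t => z + t • h with hγdef
  have hγ : ∀ t : ℝ, HasDerivAt γ h t := by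
    intro t
    simpa [hγdef] using ((hasDerivAt_id t).smul_const h).const_add z
  set φ : ℝ → ℝ := fun t => g (γ t) with hφdef
  set φ' : ℝ → ℝ := fun t => fderiv ℝ g (γ t) h with hφ'def
  have hφ : ∀ t, HasDerivAt φ (φ' t) t := fun t =>
    ((hg.differentiable (by norm_num) (γ t)).hasFDerivAt).comp_hasDerivAt t (hγ t)
  have hφ' : ∀ t, HasDerivAt φ' (fderiv ℝ (fderiv ℝ g) (γ t) h h) t := by
    intro t
    have h1 : HasFDerivAt (fun w => fderiv ℝ g w h)
        ((ContinuousLinearMap.apply ℝ ℝ h).comp (fderiv ℝ (fderiv ℝ g) (γ t))) (γ t) :=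
      (ContinuousLinearMap.apply ℝ ℝ h).hasFDerivAt.comp _
        ((hg1.differentiable one_ne_zero (γ t)).hasFDerivAt)
    exact h1.comp_hasDerivAt t (hγ t)
  have key : ∀ t ∈ Set.Icc (0:ℝ) 1, φ' t - φ' 0 ≤ C * t := by
    intro t ht
    have hms := Convex.norm_image_sub_le_of_norm_hasDerivWithin_le
      (f := φ') (f' := fun t => fderiv ℝ (fderiv ℝ g) (γ t) h h) (s := Set.Icc (0:ℝ) 1)
      (fun x _ => (hφ' x).hasDerivWithinAt) (fun x _ => hC (γ x)) (convex_Icc 0 1)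
      (Set.left_mem_Icc.2 zero_le_one) ht
    rw [sub_zero, Real.norm_eq_abs, Real.norm_eq_abs, abs_of_nonneg ht.1] at hms
    linarith [le_of_abs_le hms]
  set ψ : ℝ → ℝ := fun t => φ t - φ 0 - t * φ' 0 - C / 2 * t ^ 2 with hψdef
  have hψ : ∀ t, HasDerivAt ψ (φ' t - φ' 0 - C * t) t := by
    intro t
    have h1 : HasDerivAt (fun t : ℝ => t * φ' 0) (φ' 0) t := by
      simpa using (hasDerivAt_id t).mul_const (φ' 0)
    have h2 : HasDerivAt (fun t : ℝ => C / 2 * t ^ 2) (C * t) t := by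
      have := (hasDerivAt_pow 2 t).const_mul (C / 2)
      exact this.congr_deriv (by norm_num; ring)
    exact (((hφ t).sub_const (φ 0)).sub h1).sub h2
  have hmono : AntitoneOn ψ (Set.Icc 0 1) := by
    apply antitoneOn_of_deriv_nonpos (convex_Icc 0 1)
    · exact fun x _ => (hψ x).continuousAt.continuousWithinAt
    · intro x _
      exact (hψ x).differentiableAt.differentiableWithinAt
    · intro x hx
      rw [(hψ x).deriv]
      rw [interior_Icc] at hx
      have := key x ⟨hx.1.le, hx.2.le⟩
      linarith
  have h01 := hmono (Set.left_mem_Icc.2 zero_le_one) (Set.right_mem_Icc.2 zero_le_one) zero_le_one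
  have hψ0 : ψ 0 = 0 := by simp [hψdef]
  have hφ1 : φ 1 = g (z + h) := by simp [hφdef, hγdef]
  have hφ0 : φ 0 = g z := by simp [hφdef, hγdef]
  have hφ'0 : φ' 0 = fderiv ℝ g z h := by simp [hφ'def, hγdef]
  rw [hψ0] at h01
  simp only [hψdef, hφ1, hφ0, hφ'0] at h01
  linarith

section Helpers

variable {d : ℕ}
local notation "E" => EuclideanSpace ℝ (Fin d)

lemma quad_bound (L : ℝ) (g : E × E → ℝ) (hg : ContDiff ℝ 2 g)
    (hsym : ∀ u v, g (u, v) = g (v, u))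
    (huu : ∀ z (a b : E), ‖iteratedFDeriv ℝ 2 g z ![(a,0),(b,0)]‖ ≤ L * ‖a‖ * ‖b‖)
    (huv : ∀ z (a b : E), ‖iteratedFDeriv ℝ 2 g z ![(a,0),(0,b)]‖ ≤ L * ‖a‖ * ‖b‖)
    (w : E × E) (a b : E) :
    ‖fderiv ℝ (fderiv ℝ g) w (a, b) (a, b)‖ ≤ L * (‖a‖ + ‖b‖) ^ 2 := by
  have Buu : ∀ (z : E × E) (x yy : E),
      ‖fderiv ℝ (fderiv ℝ g) z (x, (0:E)) (yy, 0)‖ ≤ L * ‖x‖ * ‖yy‖ := by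
    intro z x yy
    have h2 := iteratedFDeriv_two_apply (𝕜 := ℝ) g z ![(x,(0:E)),(yy,0)]
    simp only [Matrix.cons_val_zero, Matrix.cons_val_one, Matrix.head_cons] at h2
    have := huu z x yy
    rwa [h2] at this
  have Buv : ∀ (z : E × E) (x yy : E),
      ‖fderiv ℝ (fderiv ℝ g) z (x, (0:E)) ((0:E), yy)‖ ≤ L * ‖x‖ * ‖yy‖ := by
    intro z x yy
    have h2 := iteratedFDeriv_two_apply (𝕜 := ℝ) g z ![(x,(0:E)),((0:E),yy)]
    simp only [Matrix.cons_val_zero, Matrix.cons_val_one, Matrix.head_cons] at h2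
    have := huv z x yy
    rwa [h2] at this
  have Bvv : ∀ (z : E × E) (x : E),
      ‖fderiv ℝ (fderiv ℝ g) z ((0:E), x) ((0:E), x)‖ ≤ L * ‖x‖ * ‖x‖ := by
    intro z x
    set σ : (E × E) →L[ℝ] (E × E) :=
      (ContinuousLinearEquiv.prodComm ℝ E E).toContinuousLinearMap with hσdef
    have hgs : g ∘ σ = g := by
      funext p
      exact hsym p.2 p.1
    have hcomp : iteratedFDeriv ℝ 2 (g ∘ σ) z =
        (iteratedFDeriv ℝ 2 g (σ z)).compContinuousLinearMap (fun _ => σ) :=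
      σ.iteratedFDeriv_comp_right hg z (by norm_num)
    rw [hgs] at hcomp
    have happ : iteratedFDeriv ℝ 2 g z ![((0:E),x),((0:E),x)] =
        iteratedFDeriv ℝ 2 g (σ z) ![(x,(0:E)),(x,0)] := by
      rw [hcomp, ContinuousMultilinearMap.compContinuousLinearMap_apply]
      congr 1
      funext k
      fin_cases k <;> simp [hσdef]
    have h2 := iteratedFDeriv_two_apply (𝕜 := ℝ) g z ![((0:E),x),((0:E),x)]
    simp only [Matrix.cons_val_zero, Matrix.cons_val_one, Matrix.head_cons] at h2
    rw [← h2, happ]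
    have h3 := iteratedFDeriv_two_apply (𝕜 := ℝ) g (σ z) ![(x,(0:E)),(x,0)]
    rw [h3]
    simp only [Matrix.cons_val_zero, Matrix.cons_val_one, Matrix.head_cons]
    exact Buu (σ z) x x
  have hsymm : IsSymmSndFDerivAt ℝ g w := hg.contDiffAt.isSymmSndFDerivAt (by simp)
  have hdecomp : fderiv ℝ (fderiv ℝ g) w (a, b) (a, b) =
      fderiv ℝ (fderiv ℝ g) w (a,0) (a,0) + fderiv ℝ (fderiv ℝ g) w (a,0) (0,b)
      + (fderiv ℝ (fderiv ℝ g) w (0,b) (a,0) + fderiv ℝ (fderiv ℝ g) w (0,b) (0,b)) := by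
    have h1 : ((a,b) : E × E) = (a,0) + (0,b) := by simp [Prod.ext_iff]
    rw [h1]
    simp only [map_add, ContinuousLinearMap.add_apply]
    abel
  rw [hdecomp]
  have hvu : fderiv ℝ (fderiv ℝ g) w ((0:E),b) (a,(0:E)) = fderiv ℝ (fderiv ℝ g) w (a,0) (0,b) :=
    hsymm _ _
  calc ‖fderiv ℝ (fderiv ℝ g) w (a,0) (a,0) + fderiv ℝ (fderiv ℝ g) w (a,0) (0,b)
      + (fderiv ℝ (fderiv ℝ g) w (0,b) (a,0) + fderiv ℝ (fderiv ℝ g) w (0,b) (0,b))‖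
      ≤ ‖fderiv ℝ (fderiv ℝ g) w (a,0) (a,0)‖ + ‖fderiv ℝ (fderiv ℝ g) w (a,0) (0,b)‖
      + (‖fderiv ℝ (fderiv ℝ g) w (0,b) (a,0)‖ + ‖fderiv ℝ (fderiv ℝ g) w (0,b) (0,b)‖) := by
        exact le_trans (norm_add_le _ _) (by gcongr <;> exact norm_add_le _ _)
    _ ≤ L * ‖a‖ * ‖a‖ + L * ‖a‖ * ‖b‖ + (L * ‖a‖ * ‖b‖ + L * ‖b‖ * ‖b‖) := by
        apply add_le_add (add_le_add (Buu w a a) (Buv w a b))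
        apply add_le_add _ (Bvv w b)
        rw [hvu]
        exact Buv w a b
    _ = L * (‖a‖ + ‖b‖) ^ 2 := by ring

lemma per_term (L : ℝ) (g : E × E → ℝ) (hg : ContDiff ℝ 2 g)
    (hsym : ∀ u v, g (u, v) = g (v, u))
    (huu : ∀ z (a b : E), ‖iteratedFDeriv ℝ 2 g z ![(a,0),(b,0)]‖ ≤ L * ‖a‖ * ‖b‖)
    (huv : ∀ z (a b : E), ‖iteratedFDeriv ℝ 2 g z ![(a,0),(0,b)]‖ ≤ L * ‖a‖ * ‖b‖)
    (u v a b : E) :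
    g (u + a, v + b) ≤ g (u, v) + fderiv ℝ g (u, v) (a, b) + L * (‖a‖ + ‖b‖) ^ 2 / 2 := by
  have := taylor_quad g hg (u, v) (a, b) (L * (‖a‖ + ‖b‖) ^ 2)
    (fun w => quad_bound L g hg hsym huu huv w a b)
  simpa [Prod.mk_add_mk] using this

end Helpers

set_option maxHeartbeats 2000000 in
/-- Block smoothness of the embedding-learning objective: with
`f(Θ,Φ) = ∑_{i,j} D(i,j) ℓ(y_{ij}) (θ_i, φ_j)`, `ℓ(y)` twice continuously
differentiable, symmetric in its two arguments and with second derivative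
blocks (`uu` and `uv`) bounded by `L` in operator norm, perturbing only
`θ_i` by `δ_i` and `φ_j` by `δ_j` gives
`f(Θ',Φ') ≤ f(Θ,Φ) + ∇_{θ_i}f·δ_i + ∇_{φ_j}f·δ_j + L p_i ‖δ_i‖² + L p_j ‖δ_j‖²`. -/
theorem stmt_13 {U V : Type*} [Fintype U] [Fintype V] [DecidableEq U]
    [DecidableEq V] {d : ℕ}
    (D : U → V → ℝ) (hD : ∀ i j, 0 ≤ D i j) (hDsum : ∑ i, ∑ j, D i j = 1)
    (y : U → V → ℝ) (L : ℝ) (hL : 0 < L)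
    (ℓ : ℝ → EuclideanSpace ℝ (Fin d) × EuclideanSpace ℝ (Fin d) → ℝ)
    (hsmooth : ∀ c, ContDiff ℝ 2 (ℓ c))
    (hsym : ∀ c u v, ℓ c (u, v) = ℓ c (v, u))
    (huu : ∀ c z (a b : EuclideanSpace ℝ (Fin d)),
      ‖iteratedFDeriv ℝ 2 (ℓ c) z ![(a, 0), (b, 0)]‖ ≤ L * ‖a‖ * ‖b‖)
    (huv : ∀ c z (a b : EuclideanSpace ℝ (Fin d)),
      ‖iteratedFDeriv ℝ 2 (ℓ c) z ![(a, 0), (0, b)]‖ ≤ L * ‖a‖ * ‖b‖)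
    (f : (U → EuclideanSpace ℝ (Fin d)) → (V → EuclideanSpace ℝ (Fin d)) → ℝ)
    (hf : ∀ Θ Φ, f Θ Φ = ∑ i, ∑ j, D i j * ℓ (y i j) (Θ i, Φ j))
    (Θ : U → EuclideanSpace ℝ (Fin d)) (Φ : V → EuclideanSpace ℝ (Fin d))
    (i : U) (j : V) (δi δj : EuclideanSpace ℝ (Fin d)) :
    f (Function.update Θ i (Θ i + δi)) (Function.update Φ j (Φ j + δj)) ≤
      f Θ Φ +
        fderiv ℝ (fun u => f (Function.update Θ i u) Φ) (Θ i) δi +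
        fderiv ℝ (fun v => f Θ (Function.update Φ j v)) (Φ j) δj +
        L * (∑ j', D i j') * ‖δi‖ ^ 2 +
        L * (∑ i', D i' j) * ‖δj‖ ^ 2 := by
  classical
  -- abbreviations
  set a : U → EuclideanSpace ℝ (Fin d) := fun i' => if i' = i then δi else 0 with hadef
  set b : V → EuclideanSpace ℝ (Fin d) := fun j' => if j' = j then δj else 0 with hbdef
  have hupdΘ : ∀ i', Function.update Θ i (Θ i + δi) i' = Θ i' + a i' := by
    intro i'
    by_cases h : i' = i
    · subst h; simp [hadef]
    · simp [Function.update_of_ne h, hadef, h]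
  have hupdΦ : ∀ j', Function.update Φ j (Φ j + δj) j' = Φ j' + b j' := by
    intro j'
    by_cases h : j' = j
    · subst h; simp [hbdef]
    · simp [Function.update_of_ne h, hbdef, h]
  -- the row derivative
  have hrowEq : (fun u => f (Function.update Θ i u) Φ) =
      fun u => ∑ i', ∑ j', D i' j' * ℓ (y i' j') (Function.update Θ i u i', Φ j') := by
    funext u; rw [hf]
  set Grow : EuclideanSpace ℝ (Fin d) →L[ℝ] ℝ := ∑ j', D i j' • ((fderiv ℝ (ℓ (y i j')) (Θ i, Φ j')).comp
      ((ContinuousLinearMap.id ℝ (EuclideanSpace ℝ (Fin d))).prod 0)) with hGrow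
  have hrow : HasFDerivAt (fun u => f (Function.update Θ i u) Φ) Grow (Θ i) := by
    rw [hrowEq]
    have hsum : HasFDerivAt
        (fun u => ∑ i', ∑ j', D i' j' * ℓ (y i' j') (Function.update Θ i u i', Φ j'))
        (∑ i', if i' = i then Grow else 0) (Θ i) := by
      apply HasFDerivAt.fun_sum
      intro i' _
      by_cases hii : i' = i
      · subst hii
        simp only [if_pos rfl]
        have hre : (fun u => ∑ j', D i' j' * ℓ (y i' j') (Function.update Θ i' u i', Φ j'))
            = fun u : EuclideanSpace ℝ (Fin d) => ∑ j', D i' j' * ℓ (y i' j') (u, Φ j') := by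
          funext u; simp
        rw [hre, hGrow]
        apply HasFDerivAt.fun_sum
        intro j' _
        have hinner : HasFDerivAt (fun u : EuclideanSpace ℝ (Fin d) => (u, Φ j'))
            ((ContinuousLinearMap.id ℝ (EuclideanSpace ℝ (Fin d))).prod 0) (Θ i') :=
          HasFDerivAt.prodMk (hasFDerivAt_id _) (hasFDerivAt_const _ _)
        exact (((hsmooth (y i' j')).differentiable (by norm_num)
          (Θ i', Φ j')).hasFDerivAt.comp (Θ i') hinner).const_mul (D i' j')
      · simp only [if_neg hii]
        have hre : (fun u => ∑ j', D i' j' * ℓ (y i' j') (Function.update Θ i u i', Φ j'))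
            = fun _ : EuclideanSpace ℝ (Fin d) => ∑ j', D i' j' * ℓ (y i' j') (Θ i', Φ j') := by
          funext u; simp [Function.update_of_ne hii]
        rw [hre]
        exact hasFDerivAt_const _ _
    simpa [Finset.sum_ite_eq'] using hsum
  have hrowval : fderiv ℝ (fun u => f (Function.update Θ i u) Φ) (Θ i) δi =
      ∑ j', D i j' * fderiv ℝ (ℓ (y i j')) (Θ i, Φ j') (δi, 0) := by
    rw [hrow.fderiv, hGrow]
    simp only [ContinuousLinearMap.sum_apply, ContinuousLinearMap.smul_apply,
      ContinuousLinearMap.comp_apply, ContinuousLinearMap.prod_apply,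
      ContinuousLinearMap.coe_id', id_eq, ContinuousLinearMap.zero_apply, smul_eq_mul]
  -- the column derivative
  have hcolEq : (fun v => f Θ (Function.update Φ j v)) =
      fun v => ∑ i', ∑ j', D i' j' * ℓ (y i' j') (Θ i', Function.update Φ j v j') := by
    funext v; rw [hf]
  set Gcol : EuclideanSpace ℝ (Fin d) →L[ℝ] ℝ := ∑ i', D i' j • ((fderiv ℝ (ℓ (y i' j)) (Θ i', Φ j)).comp
      ((0 : EuclideanSpace ℝ (Fin d) →L[ℝ] EuclideanSpace ℝ (Fin d)).prod (ContinuousLinearMap.id ℝ (EuclideanSpace ℝ (Fin d))))) with hGcol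
  have hcol : HasFDerivAt (fun v => f Θ (Function.update Φ j v)) Gcol (Φ j) := by
    rw [hcolEq]
    have hswap : (fun v : EuclideanSpace ℝ (Fin d) => ∑ i', ∑ j', D i' j' * ℓ (y i' j') (Θ i', Function.update Φ j v j'))
        = fun v : EuclideanSpace ℝ (Fin d) => ∑ j', ∑ i', D i' j' * ℓ (y i' j') (Θ i', Function.update Φ j v j') := by
      funext v; rw [Finset.sum_comm]
    rw [hswap]
    have hsum : HasFDerivAt
        (fun v : EuclideanSpace ℝ (Fin d) => ∑ j', ∑ i', D i' j' * ℓ (y i' j') (Θ i', Function.update Φ j v j'))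
        (∑ j', if j' = j then Gcol else 0) (Φ j) := by
      apply HasFDerivAt.fun_sum
      intro j' _
      by_cases hjj : j' = j
      · subst hjj
        simp only [if_pos rfl]
        have hre : (fun v => ∑ i', D i' j' * ℓ (y i' j') (Θ i', Function.update Φ j' v j'))
            = fun v : EuclideanSpace ℝ (Fin d) => ∑ i', D i' j' * ℓ (y i' j') (Θ i', v) := by
          funext v; simp
        rw [hre, hGcol]
        apply HasFDerivAt.fun_sum
        intro i' _
        have hinner : HasFDerivAt (fun v : EuclideanSpace ℝ (Fin d) => ((Θ i' : EuclideanSpace ℝ (Fin d)), v))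
            ((0 : EuclideanSpace ℝ (Fin d) →L[ℝ] EuclideanSpace ℝ (Fin d)).prod (ContinuousLinearMap.id ℝ (EuclideanSpace ℝ (Fin d)))) (Φ j') :=
          HasFDerivAt.prodMk (hasFDerivAt_const _ _) (hasFDerivAt_id _)
        exact (((hsmooth (y i' j')).differentiable (by norm_num)
          (Θ i', Φ j')).hasFDerivAt.comp (Φ j') hinner).const_mul (D i' j')
      · simp only [if_neg hjj]
        have hre : (fun v => ∑ i', D i' j' * ℓ (y i' j') (Θ i', Function.update Φ j v j'))
            = fun _ : EuclideanSpace ℝ (Fin d) => ∑ i', D i' j' * ℓ (y i' j') (Θ i', Φ j') := by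
          funext v; simp [Function.update_of_ne hjj]
        rw [hre]
        exact hasFDerivAt_const _ _
    simpa [Finset.sum_ite_eq'] using hsum
  have hcolval : fderiv ℝ (fun v => f Θ (Function.update Φ j v)) (Φ j) δj =
      ∑ i', D i' j * fderiv ℝ (ℓ (y i' j)) (Θ i', Φ j) (0, δj) := by
    rw [hcol.fderiv, hGcol]
    simp only [ContinuousLinearMap.sum_apply, ContinuousLinearMap.smul_apply,
      ContinuousLinearMap.comp_apply, ContinuousLinearMap.prod_apply,
      ContinuousLinearMap.coe_id', id_eq, ContinuousLinearMap.zero_apply, smul_eq_mul]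
  -- step 1: termwise Taylor bound
  have step1 : f (Function.update Θ i (Θ i + δi)) (Function.update Φ j (Φ j + δj)) ≤
      ∑ i', ∑ j', D i' j' * (ℓ (y i' j') (Θ i', Φ j')
        + fderiv ℝ (ℓ (y i' j')) (Θ i', Φ j') (a i', b j')
        + L * (‖a i'‖ + ‖b j'‖) ^ 2 / 2) := by
    rw [hf]
    apply Finset.sum_le_sum
    intro i' _
    apply Finset.sum_le_sum
    intro j' _
    rw [hupdΘ i', hupdΦ j']
    exact mul_le_mul_of_nonneg_left
      (per_term L (ℓ (y i' j')) (hsmooth _) (hsym _) (huu _) (huv _)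
        (Θ i') (Φ j') (a i') (b j')) (hD i' j')
  -- split the sum
  have hsplit : ∑ i', ∑ j', D i' j' * (ℓ (y i' j') (Θ i', Φ j')
        + fderiv ℝ (ℓ (y i' j')) (Θ i', Φ j') (a i', b j')
        + L * (‖a i'‖ + ‖b j'‖) ^ 2 / 2)
      = (∑ i', ∑ j', D i' j' * ℓ (y i' j') (Θ i', Φ j'))
        + (∑ i', ∑ j', D i' j' * fderiv ℝ (ℓ (y i' j')) (Θ i', Φ j') (a i', b j'))
        + (∑ i', ∑ j', D i' j' * (L * (‖a i'‖ + ‖b j'‖) ^ 2 / 2)) := by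
    simp only [mul_add, Finset.sum_add_distrib]
  -- the first-order term
  have horder1 : ∑ i', ∑ j', D i' j' * fderiv ℝ (ℓ (y i' j')) (Θ i', Φ j') (a i', b j')
      = (∑ j', D i j' * fderiv ℝ (ℓ (y i j')) (Θ i, Φ j') (δi, 0))
        + (∑ i', D i' j * fderiv ℝ (ℓ (y i' j)) (Θ i', Φ j) (0, δj)) := by
    have hsplit2 : ∀ i' j', fderiv ℝ (ℓ (y i' j')) (Θ i', Φ j') (a i', b j')
        = fderiv ℝ (ℓ (y i' j')) (Θ i', Φ j') (a i', 0)
          + fderiv ℝ (ℓ (y i' j')) (Θ i', Φ j') (0, b j') := by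
      intro i' j'
      rw [← map_add]
      congr 1
      simp [Prod.ext_iff]
    have h2 : ∑ i', ∑ j', D i' j' * fderiv ℝ (ℓ (y i' j')) (Θ i', Φ j') (a i', b j')
        = (∑ i', ∑ j', D i' j' * fderiv ℝ (ℓ (y i' j')) (Θ i', Φ j') (a i', 0))
          + (∑ i', ∑ j', D i' j' * fderiv ℝ (ℓ (y i' j')) (Θ i', Φ j') (0, b j')) := by
      simp only [hsplit2, mul_add, Finset.sum_add_distrib]
    rw [h2]
    congr 1
    · rw [Finset.sum_eq_single i]
      · simp [hadef]
      · intro i' _ hii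
        have : a i' = (0 : EuclideanSpace ℝ (Fin d)) := by simp [hadef, hii]
        rw [this]
        simp [Prod.mk_zero_zero]
      · intro h; exact absurd (Finset.mem_univ i) h
    · have h3 : ∀ i', ∑ j', D i' j' * fderiv ℝ (ℓ (y i' j')) (Θ i', Φ j') (0, b j')
          = D i' j * fderiv ℝ (ℓ (y i' j)) (Θ i', Φ j) (0, δj) := by
        intro i'
        rw [Finset.sum_eq_single j]
        · simp [hbdef]
        · intro j' _ hjj
          have : b j' = (0 : EuclideanSpace ℝ (Fin d)) := by simp [hbdef, hjj]
          rw [this]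
          simp [Prod.mk_zero_zero]
        · intro h; exact absurd (Finset.mem_univ j) h
      simp only [h3]
  -- the second-order term
  have horder2 : ∑ i', ∑ j', D i' j' * (L * (‖a i'‖ + ‖b j'‖) ^ 2 / 2)
      ≤ L * (∑ j', D i j') * ‖δi‖ ^ 2 + L * (∑ i', D i' j) * ‖δj‖ ^ 2 := by
    have hterm : ∀ i' j', D i' j' * (L * (‖a i'‖ + ‖b j'‖) ^ 2 / 2)
        ≤ D i' j' * (L * ‖a i'‖ ^ 2 + L * ‖b j'‖ ^ 2) := by
      intro i' j'
      apply mul_le_mul_of_nonneg_left _ (hD i' j')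
      nlinarith [mul_nonneg hL.le (sq_nonneg (‖a i'‖ - ‖b j'‖))]
    calc ∑ i', ∑ j', D i' j' * (L * (‖a i'‖ + ‖b j'‖) ^ 2 / 2)
        ≤ ∑ i', ∑ j', D i' j' * (L * ‖a i'‖ ^ 2 + L * ‖b j'‖ ^ 2) :=
          Finset.sum_le_sum fun i' _ => Finset.sum_le_sum fun j' _ => hterm i' j'
      _ = (∑ i', ∑ j', D i' j' * (L * ‖a i'‖ ^ 2))
          + (∑ i', ∑ j', D i' j' * (L * ‖b j'‖ ^ 2)) := by
          simp only [mul_add, Finset.sum_add_distrib]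
      _ = L * (∑ j', D i j') * ‖δi‖ ^ 2 + L * (∑ i', D i' j) * ‖δj‖ ^ 2 := by
          congr 1
          · rw [Finset.sum_eq_single i]
            · have hai : a i = δi := by simp [hadef]
              rw [hai, ← Finset.sum_mul]
              ring
            · intro i' _ hii
              have : a i' = (0 : EuclideanSpace ℝ (Fin d)) := by simp [hadef, hii]
              simp [this]
            · intro h; exact absurd (Finset.mem_univ i) h
          · have h3 : ∀ i', ∑ j', D i' j' * (L * ‖b j'‖ ^ 2) = D i' j * (L * ‖δj‖ ^ 2) := by
              intro i'
              rw [Finset.sum_eq_single j]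
              · simp [hbdef]
              · intro j' _ hjj
                have : b j' = (0 : EuclideanSpace ℝ (Fin d)) := by simp [hbdef, hjj]
                simp [this]
              · intro h; exact absurd (Finset.mem_univ j) h
            simp only [h3]
            rw [← Finset.sum_mul]
            ring
  -- conclude
  rw [hrowval, hcolval]
  have hfΘ : ∑ i', ∑ j', D i' j' * ℓ (y i' j') (Θ i', Φ j') = f Θ Φ := (hf Θ Φ).symm
  calc f (Function.update Θ i (Θ i + δi)) (Function.update Φ j (Φ j + δj))
      ≤ ∑ i', ∑ j', D i' j' * (ℓ (y i' j') (Θ i', Φ j')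
        + fderiv ℝ (ℓ (y i' j')) (Θ i', Φ j') (a i', b j')
        + L * (‖a i'‖ + ‖b j'‖) ^ 2 / 2) := step1
    _ = f Θ Φ + ((∑ j', D i j' * fderiv ℝ (ℓ (y i j')) (Θ i, Φ j') (δi, 0))
          + (∑ i', D i' j * fderiv ℝ (ℓ (y i' j)) (Θ i', Φ j) (0, δj)))
        + (∑ i', ∑ j', D i' j' * (L * (‖a i'‖ + ‖b j'‖) ^ 2 / 2)) := by
        rw [hsplit, horder1, hfΘ]
    _ ≤ _ := by linarith [horder2]
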